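/- Let S be a semifilter and U an open subset of 2^ω with S ⊆ U. Then for every X ∈ S there is a function f : ω → ω such that for every m, every Y ⊆ ω with Y ∩ [m, f(m)) = X ∩ [m, f(m)) belongs to U. -/
import Mathlib


def AlmostSubC (X Y : ℕ → Bool) : Prop :=
  ({n | X n = true} \ {n | Y n = true}).Finite

def IsSemifilterC (S : Set (ℕ → Bool)) : Prop :=
  S.Nonempty ∧ S ≠ Set.univ ∧ ∀ X Y : ℕ → Bool, X ∈ S → AlmostSubC X Y → Y ∈ S

/-- If `S` is a semifilter contained in an open set `U ⊆ 2^ω`, then for every `X ∈ S`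
there is `f : ω → ω` such that for each `m`, every `Y` agreeing with `X` on the
interval `[m, f(m))` belongs to `U`. -/
theorem fast_function (S U : Set (ℕ → Bool)) (hS : IsSemifilterC S)
    (hU : IsOpen U) (hSU : S ⊆ U) (X : ℕ → Bool) (hX : X ∈ S) :
    ∃ f : ℕ → ℕ, ∀ m : ℕ, ∀ Y : ℕ → Bool,
      (∀ i, m ≤ i → i < f m → Y i = X i) → Y ∈ U := by
  classical
  obtain ⟨-, -, hup⟩ := hS
  have hcyl : ∀ Y ∈ U, ∃ n, ∀ Z : ℕ → Bool, (∀ i < n, Z i = Y i) → Z ∈ U := by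
    intro Y hY
    rw [isOpen_pi_iff] at hU
    obtain ⟨I, u, h1, h2⟩ := hU Y hY
    refine ⟨(I.sup id) + 1, fun Z hZ => h2 ?_⟩
    intro i hi
    rw [hZ i (Nat.lt_succ_of_le (Finset.le_sup (f := id) hi))]
    exact (h1 i hi).2
  have key : ∀ m, ∃ n, ∀ Y : ℕ → Bool, (∀ i, m ≤ i → i < n → Y i = X i) → Y ∈ U := by
    intro m
    set T : Set (ℕ → Bool) := {Y | ∀ i, m ≤ i → Y i = X i} with hT
    have hTfin : T.Finite := by
      have hsub : T ⊆ (fun g : Fin m → Bool =>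
          fun i => if h : i < m then g ⟨i, h⟩ else X i) '' Set.univ := by
        intro Y hY
        refine ⟨fun j => Y j, trivial, ?_⟩
        funext i
        by_cases h : i < m
        · simp [h]
        · simp [h, hY i (le_of_not_gt h)]
      exact Set.Finite.subset (Set.finite_univ.image _) hsub
    have hTU : ∀ Y ∈ T, ∃ n, ∀ Z : ℕ → Bool, (∀ i < n, Z i = Y i) → Z ∈ U := by
      intro Y hY
      apply hcyl
      apply hSU
      apply hup X Y hX
      have hsub : {n | X n = true} \ {n | Y n = true} ⊆ {i | i < m} := by
        rintro i ⟨hi1, hi2⟩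
        by_contra h
        have := hY i (le_of_not_gt (by simpa using h))
        exact hi2 (show Y i = true from this.trans hi1)
      exact Set.Finite.subset (Set.finite_lt_nat m) hsub
    choose! g hg using hTU
    refine ⟨hTfin.toFinset.sup g, fun Y hY => ?_⟩
    set Y' : ℕ → Bool := fun i => if m ≤ i then X i else Y i with hY'def
    have hY'T : Y' ∈ T := fun i hi => by simp [Y', hi]
    have hle : g Y' ≤ hTfin.toFinset.sup g := Finset.le_sup (hTfin.mem_toFinset.mpr hY'T)
    apply hg Y' hY'T Y
    intro i hi
    by_cases h : m ≤ i
    · simp [Y', h, hY i h (lt_of_lt_of_le hi hle)]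
    · simp [Y', h]
  choose f hf using key
  exact ⟨f, hf⟩
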